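/- Let K be a compact metric space. The normed space (ℳ₀(K), ‖·‖_{KR₀}) of balanced finite signed Borel measures with the Kantorovich–Rubinstein norm is not complete, provided K is infinite: there exists a KR₀-Cauchy sequence of finite linear combinations of dipoles whose limit functional on Lip₀(K) is not represented by any finite signed Borel measure. -/

import Mathlib

open MeasureTheory Filter Topology ENNReal

private lemma tent_lip {K : Type*} [MetricSpace K] (y : K) (r : ℝ) :
    LipschitzWith 1 (fun z => max (r - dist z y) 0) := by
  apply LipschitzWith.of_dist_le_mul
  intro a b
  rw [Real.dist_eq, NNReal.coe_one, one_mul]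
  have h1 : |(r - dist a y) - (r - dist b y)| ≤ dist a b := by
    have h2 := abs_dist_sub_le a b y
    have h3 : (r - dist a y) - (r - dist b y) = -(dist a y - dist b y) := by ring
    rw [h3, abs_neg]
    exact h2
  exact (abs_max_sub_max_le_abs _ _ _).trans h1

private lemma c_eval {K : Type*} (u : ℕ → K) (x : K) (m : ℕ) (g : K → ℝ) :
    (((∑ j ∈ Finset.range m, Finsupp.single (u j) (1 : ℝ)) - Finsupp.single x (m : ℝ)).sum
      fun z a => a * g z) = ∑ j ∈ Finset.range m, (g (u j) - g x) := by
  classical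
  have h1 : ∀ j : ℕ, (Finsupp.single (u j) (1 : ℝ)).sum (fun z a => a * g z) = g (u j) := by
    intro j
    rw [Finsupp.sum_single_index (zero_mul (g (u j))), one_mul]
  have h2 : (Finsupp.single x (m : ℝ)).sum (fun z a => a * g z) = m * g x :=
    Finsupp.sum_single_index (zero_mul (g x))
  rw [Finsupp.sum_sub_index (fun a b₁ b₂ => sub_mul b₁ b₂ (g a))]
  rw [← Finsupp.sum_finset_sum_index (fun a => zero_mul (g a))
      (fun a b₁ b₂ => add_mul b₁ b₂ (g a))]
  rw [Finset.sum_congr rfl (fun j _ => h1 j), h2]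
  rw [Finset.sum_sub_distrib, Finset.sum_const, Finset.card_range, nsmul_eq_mul]

private lemma c_coeff {K : Type*} (u : ℕ → K) (x : K) (m : ℕ) :
    (((∑ j ∈ Finset.range m, Finsupp.single (u j) (1 : ℝ)) - Finsupp.single x (m : ℝ)).sum
      fun _ a => a) = 0 := by
  classical
  have h1 : ∀ j : ℕ, (Finsupp.single (u j) (1 : ℝ)).sum (fun _ a => a) = 1 := by
    intro j
    exact Finsupp.sum_single_index rfl
  have h2 : (Finsupp.single x (m : ℝ)).sum (fun _ a => a) = (m : ℝ) :=
    Finsupp.sum_single_index rfl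
  rw [Finsupp.sum_sub_index (fun _ b₁ b₂ => rfl)]
  rw [← Finsupp.sum_finset_sum_index (fun _ => rfl) (fun _ _ _ => rfl)]
  rw [Finset.sum_congr rfl (fun j _ => h1 j), h2]
  simp

private lemma geom_tail_le (a b : ℕ) :
    ∑ j ∈ Finset.Ico a b, ((1 : ℝ)/4)^(j+1) ≤ (1/4)^a := by
  rcases le_or_gt a b with h | h
  · have key : ∀ n, a ≤ n → ∑ j ∈ Finset.Ico a n, ((1 : ℝ)/4)^(j+1) ≤ (1/4)^a - (1/4)^n := by
      intro n hn
      induction n, hn using Nat.le_induction with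
      | base => simp
      | succ n hn ih =>
        rw [Finset.sum_Ico_succ_top hn]
        have h4 : (0 : ℝ) < (1/4)^n := by positivity
        have he : ((1 : ℝ)/4)^(n+1) = (1/4)^n * (1/4) := by ring
        linarith
    have h4 : (0 : ℝ) ≤ (1/4)^b := by positivity
    linarith [key b h]
  · rw [Finset.Ico_eq_empty (by omega)]
    simp only [Finset.sum_empty]
    positivity

/-- Let `K` be an infinite compact metric space. Then `(ℳ₀(K), ‖·‖_{KR₀})` is not
complete: there is a `KR₀`-Cauchy sequence of finite linear combinations of dipoles
(balanced finitely supported combinations of Diracs) whose limit functional on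
`Lip₀(K)` is not represented by any finite signed Borel measure. -/
theorem stmt18 {K : Type*} [MetricSpace K] [CompactSpace K] [Infinite K]
    [MeasurableSpace K] [BorelSpace K] :
    ∃ c : ℕ → (K →₀ ℝ),
      (∀ m, ((c m).sum fun _ a => a) = 0) ∧
      (∀ ε > (0 : ℝ), ∃ N, ∀ m ≥ N, ∀ k ≥ N,
        (⨆ f : {f : K → ℝ // LipschitzWith 1 f},
          ENNReal.ofReal |((c m).sum fun z a => a * f.1 z)
            - ((c k).sum fun z a => a * f.1 z)|) ≤ ENNReal.ofReal ε) ∧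
      ¬ ∃ ν : MeasureTheory.SignedMeasure K,
        Tendsto (fun m =>
            ⨆ f : {f : K → ℝ // LipschitzWith 1 f},
              ENNReal.ofReal |((∫ z, f.1 z ∂ν.toJordanDecomposition.posPart)
                  - ∫ z, f.1 z ∂ν.toJordanDecomposition.negPart)
                - ((c m).sum fun z a => a * f.1 z)|)
          atTop (nhds 0) := by
  classical
  -- Step 1: find an accumulation point `x`.
  obtain ⟨x, hx⟩ : ∃ x : K, ∀ δ : ℝ, 0 < δ → ∃ y : K, y ≠ x ∧ dist y x < δ := by
    by_contra h
    push_neg at h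
    have hdisc : DiscreteTopology K := by
      rw [discreteTopology_iff_isOpen_singleton]
      intro x
      obtain ⟨δ, hδ, hball⟩ := h x
      have : Metric.ball x δ = {x} := by
        apply Set.Subset.antisymm
        · intro y hy
          by_contra hyx
          simp only [Set.mem_singleton_iff] at hyx
          exact absurd (Metric.mem_ball.mp hy) (not_lt.mpr (hball y hyx))
        · intro y hy
          simp only [Set.mem_singleton_iff] at hy
          subst hy
          exact Metric.mem_ball_self hδ
      rw [← this]
      exact Metric.isOpen_ball
    haveI : Finite K := finite_of_compact_of_discrete
    exact not_finite K
  choose pick hpick_ne hpick_lt using hx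
  -- Step 2: construct a sequence converging rapidly to `x`.
  let v : ℕ → {y : K // y ≠ x} := fun n => Nat.rec
    ⟨pick (1/4) (by norm_num), hpick_ne _ _⟩
    (fun _ prev => ⟨pick (dist prev.1 x / 4)
      (by have := dist_pos.mpr prev.2; linarith), hpick_ne _ _⟩) n
  set u : ℕ → K := fun n => (v n).1 with hu
  have hne : ∀ n, u n ≠ x := fun n => (v n).2
  have hdpos : ∀ n, 0 < dist (u n) x := fun n => dist_pos.mpr (hne n)
  have hstep : ∀ n, dist (u (n+1)) x < dist (u n) x / 4 := fun n =>
    hpick_lt (dist (u n) x / 4) _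
  have h0 : dist (u 0) x < 1/4 := hpick_lt (1/4) _
  have hd4 : ∀ n, dist (u n) x < (1/4 : ℝ)^(n+1) := by
    intro n
    induction n with
    | zero => simpa using h0
    | succ n ih =>
      have := hstep n
      have h4 : ((1:ℝ)/4)^(n+1+1) = (1/4)^(n+1) / 4 := by ring
      rw [h4]
      linarith
  have hmono : ∀ i j, i < j → dist (u j) x < dist (u i) x / 4 := by
    intro i j hij
    induction j, hij using Nat.le_induction with
    | base => exact hstep i
    | succ j hj ih =>
      have h1 := hstep j
      have h2 := hdpos j
      linarith
  -- tent radii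
  set r : ℕ → ℝ := fun j => dist (u j) x / 4 with hr
  have hrpos : ∀ j, 0 < r j := fun j => by have := hdpos j; simp only [hr]; linarith
  -- separation: for i ≠ j, r j ≤ dist (u i) (u j)
  have hsep : ∀ i j, i ≠ j → r j ≤ dist (u i) (u j) := by
    intro i j hij
    have htri : dist (u i) x ≤ dist (u i) (u j) + dist (u j) x := dist_triangle _ _ _
    have htri2 : dist (u j) x ≤ dist (u j) (u i) + dist (u i) x := dist_triangle _ _ _
    rw [dist_comm (u j) (u i)] at htri2
    rcases lt_or_gt_of_ne hij with h | h
    · have := hmono i j h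
      have := hdpos j
      simp only [hr]; linarith
    · have := hmono j i h
      have := hdpos i
      simp only [hr]; linarith
  -- disjointness of balls
  have hdisj : ∀ i j, i ≠ j →
      Disjoint (Metric.ball (u i) (r i)) (Metric.ball (u j) (r j)) := by
    intro i j hij
    apply Metric.ball_disjoint_ball
    have htri : dist (u i) x ≤ dist (u i) (u j) + dist (u j) x := dist_triangle _ _ _
    have htri2 : dist (u j) x ≤ dist (u j) (u i) + dist (u i) x := dist_triangle _ _ _
    rw [dist_comm (u j) (u i)] at htri2
    rcases lt_or_gt_of_ne hij with h | h
    · have := hmono i j h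
      have := hdpos j
      simp only [hr]; linarith
    · have := hmono j i h
      have := hdpos i
      simp only [hr]; linarith
  -- the sequence of finsupps
  refine ⟨fun m => (∑ j ∈ Finset.range m, Finsupp.single (u j) (1 : ℝ))
    - Finsupp.single x (m : ℝ), fun m => c_coeff u x m, ?_, ?_⟩
  · -- Cauchy property
    intro ε hε
    obtain ⟨N, hN⟩ := exists_pow_lt_of_lt_one hε (by norm_num : (1:ℝ)/4 < 1)
    refine ⟨N, fun m hm k hk => ?_⟩
    apply iSup_le
    rintro ⟨f, hf⟩
    apply ENNReal.ofReal_le_ofReal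
    rw [c_eval, c_eval]
    have key : ∀ a b : ℕ, N ≤ a → a ≤ b →
        |∑ j ∈ Finset.range b, (f (u j) - f x) - ∑ j ∈ Finset.range a, (f (u j) - f x)| ≤ ε := by
      intro a b hNa hab
      rw [← Finset.sum_Ico_eq_sub _ hab]
      calc |∑ j ∈ Finset.Ico a b, (f (u j) - f x)|
          ≤ ∑ j ∈ Finset.Ico a b, |f (u j) - f x| := Finset.abs_sum_le_sum_abs _ _
        _ ≤ ∑ j ∈ Finset.Ico a b, ((1:ℝ)/4)^(j+1) := by
            apply Finset.sum_le_sum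
            intro j _
            have h1 : dist (f (u j)) (f x) ≤ 1 * dist (u j) x := hf.dist_le_mul _ _
            rw [Real.dist_eq, one_mul] at h1
            exact h1.trans (hd4 j).le
        _ ≤ (1/4)^a := geom_tail_le a b
        _ ≤ (1/4)^N := pow_le_pow_of_le_one (by norm_num) (by norm_num) hNa
        _ ≤ ε := hN.le
    rcases le_total k m with h | h
    · exact key k m hk h
    · rw [abs_sub_comm]; exact key m k hm h
  · -- no limit measure
    rintro ⟨ν, hν⟩
    set μ : Measure K := ν.toJordanDecomposition.posPart with hμ
    set μn : Measure K := ν.toJordanDecomposition.negPart with hμn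
    set F : ℕ → K → ℝ := fun j z => max (r j - dist z (u j)) 0 with hF
    have hFlip : ∀ j, LipschitzWith 1 (F j) := fun j => tent_lip (u j) (r j)
    have hFnonneg : ∀ j z, 0 ≤ F j z := fun j z => le_max_right _ _
    have hFself : ∀ j, F j (u j) = r j := by
      intro j
      simp only [hF, dist_self, sub_zero]
      exact max_eq_left (hrpos j).le
    have hFother : ∀ i j, i ≠ j → F j (u i) = 0 := by
      intro i j hij
      simp only [hF]
      apply max_eq_right
      have := hsep i j hij
      linarith
    have hFx : ∀ j, F j x = 0 := by
      intro j
      simp only [hF]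
      apply max_eq_right
      have h1 : dist x (u j) = dist (u j) x := dist_comm _ _
      have h2 := hdpos j
      simp only [hr] at *
      linarith
    -- value of the discrete functionals on F j
    have hSm : ∀ j m, j < m →
        (∑ i ∈ Finset.range m, (F j (u i) - F j x)) = r j := by
      intro j m hjm
      have : ∀ i ∈ Finset.range m, i ≠ j → F j (u i) - F j x = 0 := by
        intro i _ hij
        rw [hFother i j hij, hFx]
        ring
      rw [Finset.sum_eq_single j this (fun hj => absurd (Finset.mem_range.mpr hjm) hj)]
      rw [hFself, hFx]
      ring
    -- integrability
    have hFcont : ∀ j, Continuous (F j) := fun j => (hFlip j).continuous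
    have hFint : ∀ j (m' : Measure K) [IsFiniteMeasure m'], Integrable (F j) m' := by
      intro j m' hm'
      exact (hFcont j).integrable_of_hasCompactSupport
        (IsCompact.of_isClosed_subset isCompact_univ (isClosed_tsupport _)
          (Set.subset_univ _))
    -- A (F j) = r j
    have hA : ∀ j, (∫ z, F j z ∂μ) - ∫ z, F j z ∂μn = r j := by
      intro j
      by_contra hne'
      set δ := |((∫ z, F j z ∂μ) - ∫ z, F j z ∂μn) - r j| with hδ
      have hδpos : 0 < δ := abs_pos.mpr (sub_ne_zero.mpr hne')
      have hev := (hν.eventually_lt_const (ENNReal.ofReal_pos.mpr hδpos)).and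
        (eventually_ge_atTop (j+1))
      obtain ⟨m, hm1, hm2⟩ := hev.exists
      have hle : ENNReal.ofReal |((∫ z, F j z ∂μ) - ∫ z, F j z ∂μn)
          - ((((∑ i ∈ Finset.range m, Finsupp.single (u i) (1 : ℝ))
            - Finsupp.single x (m : ℝ))).sum fun z a => a * F j z)| ≤
          ⨆ f : {f : K → ℝ // LipschitzWith 1 f},
            ENNReal.ofReal |((∫ z, f.1 z ∂μ) - ∫ z, f.1 z ∂μn)
              - ((((∑ i ∈ Finset.range m, Finsupp.single (u i) (1 : ℝ))
                - Finsupp.single x (m : ℝ))).sum fun z a => a * f.1 z)| :=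
        le_iSup (fun f : {f : K → ℝ // LipschitzWith 1 f} =>
          ENNReal.ofReal |((∫ z, f.1 z ∂μ) - ∫ z, f.1 z ∂μn)
            - ((((∑ i ∈ Finset.range m, Finsupp.single (u i) (1 : ℝ))
              - Finsupp.single x (m : ℝ))).sum fun z a => a * f.1 z)|) ⟨F j, hFlip j⟩
      rw [c_eval u x m (F j), hSm j m (by omega)] at hle
      have := lt_of_le_of_lt hle hm1
      rw [ENNReal.ofReal_lt_ofReal_iff hδpos] at this
      exact absurd this (lt_irrefl δ)
    -- lower bound on the measure of each ball
    have hball : ∀ j, 1 ≤ μ (Metric.ball (u j) (r j)) := by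
      intro j
      have hint1 : Integrable (F j) μ := hFint j μ
      have hnn : 0 ≤ ∫ z, F j z ∂μn := integral_nonneg (hFnonneg j)
      have hlow : r j ≤ ∫ z, F j z ∂μ := by
        have := hA j; linarith
      have hup : (∫ z, F j z ∂μ) ≤ (μ (Metric.ball (u j) (r j))).toReal * r j := by
        have hmono' : F j ≤ (Metric.ball (u j) (r j)).indicator (fun _ => r j) := by
          intro z
          by_cases hz : z ∈ Metric.ball (u j) (r j)
          · rw [Set.indicator_of_mem hz]
            simp only [hF]
            have := dist_nonneg (x := z) (y := u j)
            apply max_le <;> linarith [(hrpos j).le]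
          · rw [Set.indicator_of_notMem hz]
            simp only [hF]
            apply max_le _ le_rfl
            have : r j ≤ dist z (u j) := not_lt.mp (fun hc => hz (Metric.mem_ball.mpr hc))
            linarith
        calc (∫ z, F j z ∂μ)
            ≤ ∫ z, (Metric.ball (u j) (r j)).indicator (fun _ => r j) z ∂μ :=
              integral_mono hint1 ((integrable_const (r j)).indicator
                Metric.isOpen_ball.measurableSet) hmono'
          _ = (μ (Metric.ball (u j) (r j))).toReal * r j := by
              rw [integral_indicator_const _ Metric.isOpen_ball.measurableSet]
              simp [smul_eq_mul, measureReal_def]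
      have h1le : (1 : ℝ) ≤ (μ (Metric.ball (u j) (r j))).toReal := by
        have hr' := hrpos j
        nlinarith
      have hfin : μ (Metric.ball (u j) (r j)) ≠ ⊤ := measure_ne_top _ _
      rw [← ENNReal.toReal_one] at h1le
      exact (ENNReal.toReal_le_toReal (by simp) hfin).mp h1le
    -- contradiction: μ is finite but contains infinitely many disjoint unit-mass balls
    have hsum : ∀ n : ℕ, (n : ℝ≥0∞) ≤ μ Set.univ := by
      intro n
      calc (n : ℝ≥0∞) = ∑ j ∈ Finset.range n, 1 := by simp
        _ ≤ ∑ j ∈ Finset.range n, μ (Metric.ball (u j) (r j)) :=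
            Finset.sum_le_sum (fun j _ => hball j)
        _ = μ (⋃ j ∈ Finset.range n, Metric.ball (u j) (r j)) := by
            rw [measure_biUnion_finset ?_ (fun j _ => Metric.isOpen_ball.measurableSet)]
            intro i _ j _ hij
            exact hdisj i j hij
        _ ≤ μ Set.univ := measure_mono (Set.subset_univ _)
    obtain ⟨n, hn⟩ := exists_nat_gt (μ Set.univ).toReal
    have := ENNReal.toReal_mono (measure_ne_top μ _) (hsum n)
    simp only [ENNReal.toReal_natCast] at this
    linarith
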